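/- Let E ⊆ ℝⁿ be a bounded convex set with nonempty interior. Then its inner radius satisfies ρ̲(E) ≥ w̲(E)/(n+1), where ρ̲(E) = sup{r > 0 : ∃x₀, B_r(x₀) ⊆ E} and w̲(E) = inf over unit vectors ω of the width w_E(ω) = sup_{x,y∈E}(x−y)·ω. -/

import Mathlib

open Metric Set

local notation "⟪" x ", " y "⟫" => @inner ℝ _ _ x y

open Finset

/-- Conical Carathéodory: any nonnegative combination can be rewritten with
linearly independent support. -/
lemma carath_cone {W : Type*} [AddCommGroup W] [Module ℝ W] {ι : Type*} [DecidableEq ι]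
    (v : ι → W) (s : Finset ι) :
    ∀ (lam : ι → ℝ), (∀ i ∈ s, 0 ≤ lam i) →
    ∃ (t : Finset ι) (mu : ι → ℝ), t ⊆ s ∧ (∀ i ∈ t, 0 ≤ mu i) ∧
      (∑ i ∈ t, mu i • v i = ∑ i ∈ s, lam i • v i) ∧
      LinearIndependent ℝ (fun i : t => v i) := by
  induction s using Finset.strongInduction with
  | _ s IH =>
    intro lam hlam
    by_cases hind : LinearIndependent ℝ (fun i : s => v i)
    · exact ⟨s, lam, Finset.Subset.refl s, hlam, rfl, hind⟩
    · obtain ⟨g0, hg0sum, i1, hg0i1⟩ := Fintype.not_linearIndependent_iff.mp hind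
      -- extend to ι, possibly negating so that some value on s is positive
      have hex : ∃ g : ι → ℝ, (∀ i, i ∉ s → g i = 0) ∧ (∑ i ∈ s, g i • v i = 0) ∧
          ∃ i ∈ s, 0 < g i := by
        rcases lt_or_ge 0 (g0 i1) with hpos | hneg
        · refine ⟨fun i => if h : i ∈ s then g0 ⟨i, h⟩ else 0, fun i hi => dif_neg hi, ?_, ?_⟩
          · rw [← Finset.sum_attach s (fun i => (if h : i ∈ s then g0 ⟨i, h⟩ else 0) • v i)]
            simpa using hg0sum
          · exact ⟨i1, i1.2, by simpa using hpos⟩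
        · refine ⟨fun i => if h : i ∈ s then -g0 ⟨i, h⟩ else 0, fun i hi => dif_neg hi, ?_, ?_⟩
          · rw [← Finset.sum_attach s (fun i => (if h : i ∈ s then -g0 ⟨i, h⟩ else 0) • v i)]
            simp only [Finset.mem_coe, Finset.coe_mem, dif_pos, neg_smul]
            rw [Finset.sum_neg_distrib, neg_eq_zero]
            simpa using hg0sum
          · refine ⟨i1, i1.2, by simpa using lt_of_le_of_ne hneg hg0i1⟩
      obtain ⟨g, hgout, hgsum, hT⟩ := hex
      classical
      set T : Finset ι := s.filter (fun i => 0 < g i) with hTdef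
      have hTne : T.Nonempty := by
        obtain ⟨i, his, hgi⟩ := hT
        exact ⟨i, Finset.mem_filter.mpr ⟨his, hgi⟩⟩
      obtain ⟨i0, hi0T, hi0min⟩ := Finset.exists_min_image T (fun i => lam i / g i) hTne
      have hi0s : i0 ∈ s := (Finset.mem_filter.mp hi0T).1
      have hgi0 : 0 < g i0 := (Finset.mem_filter.mp hi0T).2
      set r : ℝ := lam i0 / g i0 with hrdef
      have hr0 : 0 ≤ r := div_nonneg (hlam i0 hi0s) hgi0.le
      set lam' : ι → ℝ := fun i => lam i - r * g i with hlam'def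
      have hlam'nn : ∀ i ∈ s, 0 ≤ lam' i := by
        intro i his
        rcases lt_or_ge 0 (g i) with hgi | hgi
        · have hiT : i ∈ T := Finset.mem_filter.mpr ⟨his, hgi⟩
          have := hi0min i hiT
          have : r * g i ≤ lam i := by
            rw [hrdef]
            calc lam i0 / g i0 * g i ≤ lam i / g i * g i := by
                  apply mul_le_mul_of_nonneg_right (hi0min i hiT) hgi.le
              _ = lam i := div_mul_cancel₀ _ hgi.ne'
          simpa [hlam'def] using sub_nonneg.mpr this
        · have : r * g i ≤ 0 := mul_nonpos_of_nonneg_of_nonpos hr0 hgi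
          have := hlam i his
          simp only [hlam'def]; linarith
      have hlam'i0 : lam' i0 = 0 := by
        simp only [hlam'def, hrdef]
        field_simp
        ring
      have hsum' : ∑ i ∈ s, lam' i • v i = ∑ i ∈ s, lam i • v i := by
        simp only [hlam'def, sub_smul, Finset.sum_sub_distrib, mul_smul]
        rw [← Finset.smul_sum, hgsum, smul_zero, sub_zero]
      have herase : ∑ i ∈ s.erase i0, lam' i • v i = ∑ i ∈ s, lam' i • v i :=
        Finset.sum_erase s (by rw [hlam'i0, zero_smul])
      obtain ⟨t, mu, hts, hmu, hmusum, hindt⟩ :=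
        IH (s.erase i0) (Finset.erase_ssubset hi0s) lam'
          (fun i hi => hlam'nn i (Finset.mem_of_mem_erase hi))
      exact ⟨t, mu, hts.trans (Finset.erase_subset _ _), hmu,
        by rw [hmusum, herase, hsum'], hindt⟩

/-- The finitely generated cone is closed. -/
lemma cone_closed {W : Type*} [NormedAddCommGroup W] [NormedSpace ℝ W] [FiniteDimensional ℝ W]
    {ι : Type*} [DecidableEq ι] (v : ι → W) (s : Finset ι) :
    IsClosed {w : W | ∃ lam : ι → ℝ, (∀ i ∈ s, 0 ≤ lam i) ∧ w = ∑ i ∈ s, lam i • v i} := by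
  classical
  have key : {w : W | ∃ lam : ι → ℝ, (∀ i ∈ s, 0 ≤ lam i) ∧ w = ∑ i ∈ s, lam i • v i}
      = ⋃ t ∈ s.powerset.filter (fun (t : Finset ι) => LinearIndependent ℝ (fun i : ↥t => v (i : ι))),
        {w : W | ∃ mu : ι → ℝ, (∀ i ∈ t, 0 ≤ mu i) ∧ w = ∑ i ∈ t, mu i • v i} := by
    ext w
    constructor
    · rintro ⟨lam, hlam, rfl⟩
      obtain ⟨t, mu, hts, hmu, hsum, hind⟩ := carath_cone v s lam hlam
      exact Set.mem_biUnion (Finset.mem_filter.mpr ⟨Finset.mem_powerset.mpr hts, hind⟩)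
        ⟨mu, hmu, hsum.symm⟩
    · rintro hw
      simp only [Finset.mem_coe, Set.mem_iUnion, Set.mem_setOf_eq] at hw
      obtain ⟨t, ht, mu, hmu, rfl⟩ := hw
      have hts : t ⊆ s := Finset.mem_powerset.mp (Finset.mem_filter.mp ht).1
      refine ⟨fun i => if i ∈ t then mu i else 0, ?_, ?_⟩
      · intro i _
        by_cases h : i ∈ t <;> simp [h, hmu i]
      · rw [← Finset.sum_subset hts (fun x _ hnx => by simp [hnx])]
        exact Finset.sum_congr rfl (fun i hi => by simp [hi])
  rw [key]
  apply isClosed_biUnion_finset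
  intro t ht
  have hind : LinearIndependent ℝ (fun i : ↥t => v (i : ι)) := (Finset.mem_filter.mp ht).2
  set L : (↥t → ℝ) →ₗ[ℝ] W := Fintype.linearCombination ℝ (fun i : ↥t => v (i : ι)) with hLdef
  have hL : ∀ mu : ↥t → ℝ, L mu = ∑ i : ↥t, mu i • v (i : ι) := fun mu => by
    rw [hLdef, Fintype.linearCombination_apply]
  have hker : LinearMap.ker L = ⊥ := by
    rw [LinearMap.ker_eq_bot']
    intro m hm
    funext i
    exact Fintype.linearIndependent_iff.mp hind m (by rw [← hL]; exact hm) i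
  have hemb := LinearMap.isClosedEmbedding_of_injective hker
  have hK : IsClosed {mu : ↥t → ℝ | ∀ i, 0 ≤ mu i} := by
    have : {mu : ↥t → ℝ | ∀ i, 0 ≤ mu i} = ⋂ i, (fun mu : ↥t → ℝ => mu i) ⁻¹' Set.Ici 0 := by
      ext m; simp [Set.mem_iInter]
    rw [this]
    exact isClosed_iInter fun i => IsClosed.preimage (continuous_apply i) isClosed_Ici
  have himg := hemb.isClosedMap _ hK
  have heq : {w : W | ∃ mu : ι → ℝ, (∀ i ∈ t, 0 ≤ mu i) ∧ w = ∑ i ∈ t, mu i • v i}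
      = L '' {mu : ↥t → ℝ | ∀ i, 0 ≤ mu i} := by
    ext w
    constructor
    · rintro ⟨mu, hmu, rfl⟩
      refine ⟨fun i => mu i, fun i => hmu i i.2, ?_⟩
      rw [hL, ← Finset.sum_coe_sort t (fun i => mu i • v i)]
    · rintro ⟨m, hm, rfl⟩
      refine ⟨fun i => if h : i ∈ t then m ⟨i, h⟩ else 0, fun i hi => by simp only [dif_pos hi]; exact hm ⟨i, hi⟩, ?_⟩
      rw [hL, ← Finset.sum_coe_sort t (fun i => (if h : i ∈ t then m ⟨i, h⟩ else 0) • v i)]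
      exact Finset.sum_congr rfl (fun i _ => by simp)
  rw [heq]
  exact himg

/-- Farkas' lemma. -/
lemma farkas {n : ℕ} {ι : Type*} [DecidableEq ι] (s : Finset ι)
    (u : ι → EuclideanSpace ℝ (Fin n)) (b : ι → ℝ)
    (hno : ¬ ∃ lam : ι → ℝ, (∀ i ∈ s, 0 ≤ lam i) ∧
      (∑ i ∈ s, lam i • u i = 0) ∧ (∑ i ∈ s, lam i * b i < 0)) :
    ∃ x, ∀ i ∈ s, ⟪u i, x⟫ ≤ b i := by
  classical
  set v : ι → EuclideanSpace ℝ (Fin n) × ℝ := fun i => (u i, b i) with hvdef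
  set C : Set (EuclideanSpace ℝ (Fin n) × ℝ) :=
    {w | ∃ lam : ι → ℝ, (∀ i ∈ s, 0 ≤ lam i) ∧ w = ∑ i ∈ s, lam i • v i} with hCdef
  have hCclosed : IsClosed C := cone_closed v s
  have hCconv : Convex ℝ C := by
    rintro w1 ⟨lam1, h1, rfl⟩ w2 ⟨lam2, h2, rfl⟩ a c ha hc hac
    refine ⟨fun i => a * lam1 i + c * lam2 i,
      fun i hi => add_nonneg (mul_nonneg ha (h1 i hi)) (mul_nonneg hc (h2 i hi)), ?_⟩
    rw [Finset.smul_sum, Finset.smul_sum, ← Finset.sum_add_distrib]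
    exact Finset.sum_congr rfl fun i _ => by rw [add_smul, smul_smul, smul_smul]
  have h0C : (0 : EuclideanSpace ℝ (Fin n) × ℝ) ∈ C := ⟨0, by simp, by simp⟩
  have hviC : ∀ i ∈ s, v i ∈ C := by
    intro i hi
    refine ⟨fun j => if j = i then 1 else 0,
      fun j _ => by by_cases h : j = i <;> simp [h], ?_⟩
    have h9 : ∑ j ∈ s, (if j = i then (1:ℝ) else 0) • v j
        = ∑ j ∈ s, (if j = i then v j else 0) :=
      Finset.sum_congr rfl (fun j _ => by by_cases h : j = i <;> simp [h])
    rw [h9, Finset.sum_ite_eq' s i v, if_pos hi]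
  by_cases hmem : ((0 : EuclideanSpace ℝ (Fin n)), (-1 : ℝ)) ∈ C
  · exfalso
    obtain ⟨lam, hlam, hsum⟩ := hmem
    apply hno
    refine ⟨lam, hlam, ?_, ?_⟩
    · have h1 := congrArg Prod.fst hsum
      simpa [Prod.fst_sum] using h1.symm
    · have h2 := congrArg Prod.snd hsum
      have h3 : ∑ i ∈ s, lam i * b i = -1 := by
        simpa [Prod.snd_sum, smul_eq_mul, hvdef] using h2.symm
      rw [h3]; norm_num
  · obtain ⟨f, c, hfc, hCf⟩ := geometric_hahn_banach_point_closed hCconv hCclosed hmem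
    have hc0 : c < 0 := by simpa using hCf 0 h0C
    have hfnn : ∀ w ∈ C, (0:ℝ) ≤ f w := by
      intro w hw
      by_contra hneg
      push_neg at hneg
      have ht : 0 < (2*c) / f w := div_pos_of_neg_of_neg (by linarith) hneg
      have hwC : ((2*c)/f w) • w ∈ C := by
        obtain ⟨lam, hlam, rfl⟩ := hw
        refine ⟨fun i => ((2*c)/(f (∑ i ∈ s, lam i • v i))) * lam i,
          fun i hi => mul_nonneg ht.le (hlam i hi), ?_⟩
        rw [Finset.smul_sum]
        exact Finset.sum_congr rfl fun i _ => smul_smul _ _ _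
      have h4 := hCf _ hwC
      rw [map_smul, smul_eq_mul, div_mul_cancel₀ _ (ne_of_lt hneg)] at h4
      linarith
    have hs0 : (0:ℝ) < f ((0 : EuclideanSpace ℝ (Fin n)), (1:ℝ)) := by
      have h1 : f ((0 : EuclideanSpace ℝ (Fin n)),(-1:ℝ)) = - f ((0 : EuclideanSpace ℝ (Fin n)),(1:ℝ)) := by
        have h2 : ((0 : EuclideanSpace ℝ (Fin n)),(-1:ℝ)) = -((0 : EuclideanSpace ℝ (Fin n)),(1:ℝ)) := by simp [Prod.ext_iff]
        rw [h2, map_neg]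
      rw [h1] at hfc
      linarith
    set s0 : ℝ := f ((0 : EuclideanSpace ℝ (Fin n)), (1:ℝ)) with hs0def
    set g := f.comp (ContinuousLinearMap.inl ℝ (EuclideanSpace ℝ (Fin n)) ℝ) with hgdef
    have hg : ∀ x : EuclideanSpace ℝ (Fin n), g x = f (x, 0) := fun x => rfl
    set w0 := (InnerProductSpace.toDual ℝ (EuclideanSpace ℝ (Fin n))).symm g with hw0
    have hw0app : ∀ x : EuclideanSpace ℝ (Fin n), ⟪w0, x⟫ = g x := fun x => InnerProductSpace.toDual_symm_apply
    refine ⟨(-(s0⁻¹)) • w0, ?_⟩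
    intro i hi
    have hfv : 0 ≤ f (v i) := hfnn _ (hviC i hi)
    have hdecomp : f (v i) = g (u i) + b i * s0 := by
      have h5 : v i = ((u i), (0:ℝ)) + (b i) • ((0 : EuclideanSpace ℝ (Fin n)),(1:ℝ)) := by
        simp [hvdef, Prod.ext_iff]
      rw [h5, map_add, map_smul, smul_eq_mul, hg]
    have hinv : s0 * s0⁻¹ = 1 := mul_inv_cancel₀ (ne_of_gt hs0)
    have hgui : -(b i * s0) ≤ g (u i) := by linarith
    have hneg' : -s0⁻¹ ≤ 0 := by
      have : 0 < s0⁻¹ := inv_pos.mpr hs0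
      linarith
    have h6 : -s0⁻¹ * g (u i) ≤ -s0⁻¹ * -(b i * s0) :=
      mul_le_mul_of_nonpos_left hgui hneg'
    have h7 : -s0⁻¹ * -(b i * s0) = b i := by
      field_simp
    rw [real_inner_smul_right, real_inner_comm, hw0app]
    linarith

set_option maxHeartbeats 1000000 in
/-- Finite feasibility of the shrunk halfspace system. -/
lemma finite_feasible {n : ℕ} (h : EuclideanSpace ℝ (Fin n) → ℝ) (ρ : ℝ) (hρ : 0 < ρ)
    {ι : Type*} [DecidableEq ι] (s : Finset ι) (u : ι → EuclideanSpace ℝ (Fin n))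
    (hwid : ∀ i ∈ s, ((n:ℝ)+1) * ρ ≤ h (u i) + h (-(u i)))
    (happrox : ∀ i ∈ s, ∀ ε > (0:ℝ), ∃ y : EuclideanSpace ℝ (Fin n),
        (∀ j ∈ s, ⟪y, u j⟫ ≤ h (u j)) ∧ h (-(u i)) - ε < ⟪y, -(u i)⟫) :
    ∃ x, ∀ i ∈ s, ⟪u i, x⟫ ≤ h (u i) - ρ := by
  classical
  apply farkas s u (fun i => h (u i) - ρ)
  rintro ⟨lam, hlam, hlamsum, hlamb⟩
  have hlamb2 : ∑ i ∈ s, lam i * (h (u i) - ρ) < 0 := hlamb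
  set v : ι → EuclideanSpace ℝ (Fin n) × ℝ := fun i => (u i, h (u i) - ρ) with hvdef
  obtain ⟨t, mu, hts, hmu, hmusum, hind⟩ := carath_cone v s lam hlam
  have husum : ∑ i ∈ t, mu i • u i = 0 := by
    have h1 := congrArg Prod.fst hmusum
    simp only [Prod.fst_sum, Prod.smul_fst] at h1
    calc ∑ i ∈ t, mu i • u i = ∑ i ∈ s, lam i • u i := by simpa [hvdef] using h1
      _ = 0 := hlamsum
  set β : ℝ := ∑ i ∈ t, mu i * (h (u i) - ρ) with hβdef
  have hβneg : β < 0 := by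
    have h1 := congrArg Prod.snd hmusum
    simp only [Prod.snd_sum, Prod.smul_snd, smul_eq_mul] at h1
    calc β = ∑ i ∈ s, lam i * (h (u i) - ρ) := by
          rw [hβdef]; simpa [hvdef] using h1
      _ < 0 := hlamb2
  have hcard : (t.card : ℝ) ≤ (n:ℝ) + 1 := by
    have h1 : Fintype.card ↥t ≤ Module.finrank ℝ (EuclideanSpace ℝ (Fin n) × ℝ) :=
      hind.fintype_card_le_finrank
    rw [Module.finrank_prod, finrank_euclideanSpace_fin, Module.finrank_self,
      Fintype.card_coe] at h1
    exact_mod_cast h1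
  set S : ℝ := ∑ i ∈ t, mu i with hSdef
  have hS0 : 0 ≤ S := Finset.sum_nonneg hmu
  have hSpos : 0 < S := by
    rcases hS0.lt_or_eq with h1 | h1
    · exact h1
    · exfalso
      have hall : ∀ i ∈ t, mu i = 0 :=
        fun i hi => (Finset.sum_eq_zero_iff_of_nonneg hmu).mp h1.symm i hi
      have hz : β = 0 := by
        rw [hβdef]
        exact Finset.sum_eq_zero fun i hi => by rw [hall i hi, zero_mul]
      linarith
  set Q : ℝ := ∑ i ∈ t, (mu i)^2 with hQdef
  have hQ0 : 0 ≤ Q := Finset.sum_nonneg fun i _ => sq_nonneg _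
  have hSQ : S^2 ≤ ((n:ℝ)+1) * Q := by
    have h1 : S^2 ≤ (t.card : ℝ) * Q := by
      have h2 := sq_sum_le_card_mul_sum_sq (s := t) (f := mu)
      exact_mod_cast h2
    calc S^2 ≤ (t.card : ℝ) * Q := h1
      _ ≤ ((n:ℝ)+1) * Q := mul_le_mul_of_nonneg_right hcard hQ0
  have hn1 : (0:ℝ) < (n:ℝ) + 1 := by positivity
  set ε : ℝ := min (((n:ℝ)+1) * ρ) ((-β) * ((n:ℝ)+1) / (2*S)) with hεdef
  have hε : 0 < ε := by
    apply lt_min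
    · positivity
    · apply div_pos (by nlinarith) (by linarith)
  have hε1 : ε ≤ ((n:ℝ)+1) * ρ := min_le_left _ _
  have hε2 : ε * (2*S) ≤ (-β) * ((n:ℝ)+1) := by
    have h1 : ε ≤ (-β) * ((n:ℝ)+1) / (2*S) := min_le_right _ _
    rw [← le_div_iff₀ (by linarith)]
    exact h1
  have hy : ∀ i : ι, ∃ y : EuclideanSpace ℝ (Fin n), i ∈ t →
      ((∀ j ∈ s, ⟪y, u j⟫ ≤ h (u j)) ∧ h (-(u i)) - ε < ⟪y, -(u i)⟫) := by
    intro i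
    by_cases hi : i ∈ t
    · obtain ⟨y, hy1⟩ := happrox i (hts hi) ε hε
      exact ⟨y, fun _ => hy1⟩
    · exact ⟨0, fun hmem => absurd hmem hi⟩
  choose Y hY using hy
  set z : EuclideanSpace ℝ (Fin n) := ∑ j ∈ t, mu j • Y j with hzdef
  have hzero : (0:ℝ) = ∑ i ∈ t, mu i * ⟪z, u i⟫ := by
    have h1 : ⟪z, ∑ i ∈ t, mu i • u i⟫ = (0:ℝ) := by rw [husum, inner_zero_right]
    rw [← h1, inner_sum]
    exact Finset.sum_congr rfl fun i _ => (real_inner_smul_right _ _ _)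
  have hbound : ∀ i ∈ t, ⟪z, u i⟫ ≤ mu i * (ε - h (-(u i))) + (S - mu i) * h (u i) := by
    intro i hi
    have hz : ⟪z, u i⟫ = ∑ j ∈ t, mu j * ⟪Y j, u i⟫ := by
      rw [hzdef, sum_inner]
      exact Finset.sum_congr rfl fun j _ => (real_inner_smul_left _ _ _)
    rw [hz, ← Finset.add_sum_erase t _ hi]
    have hterm : mu i * ⟪Y i, u i⟫ ≤ mu i * (ε - h (-(u i))) := by
      apply mul_le_mul_of_nonneg_left _ (hmu i hi)
      have h2 := (hY i hi).2
      have h3 : ⟪Y i, -(u i)⟫ = -⟪Y i, u i⟫ := inner_neg_right _ _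
      linarith
    have hrest : ∑ j ∈ t.erase i, mu j * ⟪Y j, u i⟫ ≤ (S - mu i) * h (u i) := by
      have h4 : ∑ j ∈ t.erase i, mu j * ⟪Y j, u i⟫ ≤ ∑ j ∈ t.erase i, mu j * h (u i) := by
        apply Finset.sum_le_sum
        intro j hj
        have hjt : j ∈ t := Finset.mem_of_mem_erase hj
        exact mul_le_mul_of_nonneg_left ((hY j hjt).1 i (hts hi)) (hmu j hjt)
      have h5 : ∑ j ∈ t.erase i, mu j * h (u i) = (S - mu i) * h (u i) := by
        rw [← Finset.sum_mul, Finset.sum_erase_eq_sub hi, ← hSdef]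
      linarith
    linarith
  have hmain : (0:ℝ) ≤ ∑ i ∈ t, mu i * (mu i * (ε - h (-(u i))) + (S - mu i) * h (u i)) := by
    calc (0:ℝ) = ∑ i ∈ t, mu i * ⟪z, u i⟫ := hzero
      _ ≤ ∑ i ∈ t, mu i * (mu i * (ε - h (-(u i))) + (S - mu i) * h (u i)) :=
        Finset.sum_le_sum fun i hi => mul_le_mul_of_nonneg_left (hbound i hi) (hmu i hi)
  set W2 : ℝ := ∑ i ∈ t, (mu i)^2 * (h (u i) + h (-(u i))) with hW2def
  have hexp : ∑ i ∈ t, mu i * (mu i * (ε - h (-(u i))) + (S - mu i) * h (u i))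
      = ε * Q - W2 + S * (∑ i ∈ t, mu i * h (u i)) := by
    rw [hW2def]
    rw [hQdef, Finset.mul_sum, Finset.mul_sum, ← Finset.sum_sub_distrib, ← Finset.sum_add_distrib]
    exact Finset.sum_congr rfl fun i _ => by ring
  have hA : ∑ i ∈ t, mu i * h (u i) = β + ρ * S := by
    have h1 : β = ∑ i ∈ t, mu i * h (u i) - ρ * S := by
      rw [hβdef, hSdef, Finset.mul_sum, ← Finset.sum_sub_distrib]
      exact Finset.sum_congr rfl fun i _ => by ring
    linarith
  have hW2 : ((n:ℝ)+1) * ρ * Q ≤ W2 := by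
    rw [hW2def, hQdef, Finset.mul_sum]
    apply Finset.sum_le_sum
    intro i hi
    rw [mul_comm (((n:ℝ)+1) * ρ) ((mu i)^2)]
    exact mul_le_mul_of_nonneg_left (hwid i (hts hi)) (sq_nonneg _)
  have hkey : (((n:ℝ)+1)*ρ - ε) * Q ≤ S*β + ρ*S^2 := by
    rw [hexp, hA] at hmain
    have e1 : ε*Q - W2 + S*(β + ρ*S) = ε*Q - W2 + S*β + ρ*S^2 := by ring
    rw [e1] at hmain
    have e2 : (((n:ℝ)+1)*ρ - ε) * Q = ((n:ℝ)+1)*ρ*Q - ε*Q := by ring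
    rw [e2]
    linarith
  have p2 : (((n:ℝ)+1)) * ((((n:ℝ)+1)*ρ - ε) * Q) ≤ (((n:ℝ)+1)) * (S*β + ρ*S^2) :=
    mul_le_mul_of_nonneg_left hkey hn1.le
  have p1 : (((n:ℝ)+1)*ρ - ε) * S^2 ≤ (((n:ℝ)+1)*ρ - ε) * (((n:ℝ)+1) * Q) :=
    mul_le_mul_of_nonneg_left hSQ (by linarith)
  have p3 : S * (ε * (2*S)) ≤ S * ((-β) * ((n:ℝ)+1)) :=
    mul_le_mul_of_nonneg_left hε2 hS0
  nlinarith [p1, p2, p3, mul_pos hε (mul_pos hSpos hSpos)]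

set_option maxHeartbeats 1000000 in
theorem inner_radius_ge_min_width_div (n : ℕ) (hn : 0 < n)
    (E : Set (EuclideanSpace ℝ (Fin n)))
    (hE : Bornology.IsBounded E) (hconv : Convex ℝ E)
    (hint : (interior E).Nonempty) :
    (sInf {w : ℝ | ∃ ω : EuclideanSpace ℝ (Fin n), ‖ω‖ = 1 ∧
        w = sSup {c : ℝ | ∃ x ∈ E, ∃ y ∈ E, c = inner ℝ (x - y) ω}}) / (n + 1)
      ≤ sSup {r : ℝ | 0 < r ∧ ∃ x₀, Metric.ball x₀ r ⊆ E} := by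
  classical
  obtain ⟨z₀, hz₀⟩ := hint
  have hz₀E : z₀ ∈ E := interior_subset hz₀
  have hEne : E.Nonempty := ⟨z₀, hz₀E⟩
  obtain ⟨M, hM⟩ := hE.exists_norm_le
  have hM0 : 0 ≤ M := le_trans (norm_nonneg z₀) (hM z₀ hz₀E)
  set h : EuclideanSpace ℝ (Fin n) → ℝ :=
    fun u => sSup ((fun x => ⟪x, u⟫) '' E) with hhdef
  have himgne : ∀ u : EuclideanSpace ℝ (Fin n), ((fun x => ⟪x, u⟫) '' E).Nonempty :=
    fun u => hEne.image _
  have hbddA : ∀ u : EuclideanSpace ℝ (Fin n), ‖u‖ = 1 →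
      BddAbove ((fun x => ⟪x, u⟫) '' E) := by
    intro u hu
    refine ⟨M, ?_⟩
    rintro c ⟨x, hx, rfl⟩
    calc ⟪x, u⟫ ≤ ‖x‖ * ‖u‖ := real_inner_le_norm x u
      _ = ‖x‖ := by rw [hu, mul_one]
      _ ≤ M := hM x hx
  have hle : ∀ u : EuclideanSpace ℝ (Fin n), ‖u‖ = 1 → ∀ x ∈ E, ⟪x, u⟫ ≤ h u :=
    fun u hu x hx => le_csSup (hbddA u hu) ⟨x, hx, rfl⟩
  have hhM : ∀ u : EuclideanSpace ℝ (Fin n), ‖u‖ = 1 → h u ≤ M := by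
    intro u hu
    apply csSup_le (himgne u)
    rintro c ⟨x, hx, rfl⟩
    calc ⟪x, u⟫ ≤ ‖x‖ * ‖u‖ := real_inner_le_norm x u
      _ = ‖x‖ := by rw [hu, mul_one]
      _ ≤ M := hM x hx
  have hnear : ∀ u : EuclideanSpace ℝ (Fin n), ‖u‖ = 1 → ∀ ε > (0:ℝ),
      ∃ x ∈ E, h u - ε < ⟪x, u⟫ := by
    intro u hu ε hε
    obtain ⟨c, ⟨x, hx, rfl⟩, hc⟩ :=
      exists_lt_of_lt_csSup (himgne u) (sub_lt_self (h u) hε)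
    exact ⟨x, hx, hc⟩
  set WS : Set ℝ := {w : ℝ | ∃ ω : EuclideanSpace ℝ (Fin n), ‖ω‖ = 1 ∧
      w = sSup {c : ℝ | ∃ x ∈ E, ∃ y ∈ E, c = inner ℝ (x - y) ω}} with hWSdef
  set RS : Set ℝ := {r : ℝ | 0 < r ∧ ∃ x₀, Metric.ball x₀ r ⊆ E} with hRSdef
  have hSne : ∀ ω : EuclideanSpace ℝ (Fin n),
      (0:ℝ) ∈ {c : ℝ | ∃ x ∈ E, ∃ y ∈ E, c = inner ℝ (x - y) ω} := by
    intro ω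
    exact ⟨z₀, hz₀E, z₀, hz₀E, by rw [sub_self, inner_zero_left]⟩
  have hSbdd : ∀ ω : EuclideanSpace ℝ (Fin n), ‖ω‖ = 1 →
      BddAbove {c : ℝ | ∃ x ∈ E, ∃ y ∈ E, c = inner ℝ (x - y) ω} := by
    intro ω hω
    refine ⟨2*M, ?_⟩
    rintro c ⟨x, hx, y, hy, rfl⟩
    calc (inner ℝ (x - y) ω : ℝ) ≤ ‖x - y‖ * ‖ω‖ := real_inner_le_norm _ _
      _ = ‖x - y‖ := by rw [hω, mul_one]
      _ ≤ ‖x‖ + ‖y‖ := norm_sub_le x y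
      _ ≤ 2*M := by have h1 := hM x hx; have h2 := hM y hy; linarith
  have hWnn : ∀ w ∈ WS, (0:ℝ) ≤ w := by
    rintro w ⟨ω, hω, rfl⟩
    exact le_csSup (hSbdd ω hω) (hSne ω)
  have hWbddB : BddBelow WS := ⟨0, hWnn⟩
  have hwidth : ∀ u : EuclideanSpace ℝ (Fin n), ‖u‖ = 1 → sInf WS ≤ h u + h (-u) := by
    intro u hu
    have h1 : sInf WS ≤ sSup {c : ℝ | ∃ x ∈ E, ∃ y ∈ E, c = inner ℝ (x - y) u} :=
      csInf_le hWbddB ⟨u, hu, rfl⟩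
    have h2 : sSup {c : ℝ | ∃ x ∈ E, ∃ y ∈ E, c = inner ℝ (x - y) u} ≤ h u + h (-u) := by
      apply csSup_le ⟨0, hSne u⟩
      rintro c ⟨x, hx, y, hy, rfl⟩
      have h3 : ⟪x, u⟫ ≤ h u := hle u hu x hx
      have h4 : ⟪y, -u⟫ ≤ h (-u) := hle (-u) (by rw [norm_neg, hu]) y hy
      have h5 : (inner ℝ (x - y) u : ℝ) = ⟪x, u⟫ - ⟪y, u⟫ := inner_sub_left x y u
      have h6 : ⟪y, -u⟫ = -⟪y, u⟫ := inner_neg_right y u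
      linarith
    linarith
  obtain ⟨r₀, hr₀pos, hr₀sub⟩ := Metric.mem_nhds_iff.mp (mem_interior_iff_mem_nhds.mp hz₀)
  have hr₀E : Metric.ball z₀ r₀ ⊆ E := hr₀sub
  have hRSne : RS.Nonempty := ⟨r₀, hr₀pos, z₀, hr₀E⟩
  have heunit : ∀ j : Fin n, ‖(EuclideanSpace.single j (1:ℝ))‖ = 1 := fun j => by
    rw [EuclideanSpace.norm_single]; norm_num
  have hRSbdd : BddAbove RS := by
    refine ⟨4*M + 1, ?_⟩
    rintro r ⟨hr, x₀, hsub⟩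
    have hx₀E : x₀ ∈ E := hsub (Metric.mem_ball_self hr)
    set p := x₀ + (r/2) • EuclideanSpace.single (⟨0, hn⟩ : Fin n) (1:ℝ) with hpdef
    have hnormp : ‖p - x₀‖ = r/2 := by
      rw [hpdef]
      simp only [add_sub_cancel_left]
      rw [norm_smul, heunit, mul_one, Real.norm_eq_abs, abs_of_pos (by linarith)]
    have hpE : p ∈ E := by
      apply hsub
      rw [Metric.mem_ball, dist_eq_norm, hnormp]
      linarith
    have h2 : ‖p - x₀‖ ≤ 2*M := by
      calc ‖p - x₀‖ ≤ ‖p‖ + ‖x₀‖ := norm_sub_le p x₀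
        _ ≤ 2*M := by have h3 := hM p hpE; have h4 := hM x₀ hx₀E; linarith
    rw [hnormp] at h2
    linarith
  have hRSpos : 0 < sSup RS :=
    lt_of_lt_of_le hr₀pos (le_csSup hRSbdd ⟨hr₀pos, z₀, hr₀E⟩)
  by_contra hcon
  push_neg at hcon
  have hn1 : (0:ℝ) < (n:ℝ) + 1 := by positivity
  set ρ : ℝ := (sSup RS + sInf WS / ((n:ℝ)+1)) / 2 with hρdef
  have hρ1 : sSup RS < ρ := by rw [hρdef]; linarith
  have hρ2 : ρ < sInf WS / ((n:ℝ)+1) := by rw [hρdef]; linarith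
  have hρpos : 0 < ρ := hRSpos.trans hρ1
  have hρlt : ((n:ℝ)+1) * ρ < sInf WS := (lt_div_iff₀' hn1).mp hρ2
  -- halfspaces
  set D : EuclideanSpace ℝ (Fin n) → Set (EuclideanSpace ℝ (Fin n)) :=
    fun u => {x | ⟪u, x⟫ ≤ h u - ρ} with hDdef
  have hDclosed : ∀ u, IsClosed (D u) := by
    intro u
    have h1 : D u = (fun x => ⟪u, x⟫) ⁻¹' (Set.Iic (h u - ρ)) := rfl
    rw [h1]
    exact IsClosed.preimage (Continuous.inner continuous_const continuous_id) isClosed_Iic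
  set B₀ : Set (EuclideanSpace ℝ (Fin n)) :=
    (⋂ j : Fin n, D (EuclideanSpace.single j 1)) ∩
      (⋂ j : Fin n, D (-(EuclideanSpace.single j 1))) with hB₀def
  have hB₀closed : IsClosed B₀ :=
    IsClosed.inter (isClosed_iInter fun j => hDclosed _) (isClosed_iInter fun j => hDclosed _)
  have hB₀bounded : Bornology.IsBounded B₀ := by
    rw [isBounded_iff_forall_norm_le]
    refine ⟨Real.sqrt ((n:ℝ) * M^2), ?_⟩
    rintro x ⟨hx1, hx2⟩
    have hxj : ∀ j : Fin n, |x j| ≤ M := by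
      intro j
      have h1 : ⟪(EuclideanSpace.single j (1:ℝ)), x⟫ ≤ h (EuclideanSpace.single j (1:ℝ)) - ρ :=
        Set.mem_iInter.mp hx1 j
      have h2 : ⟪-(EuclideanSpace.single j (1:ℝ)), x⟫
          ≤ h (-(EuclideanSpace.single j (1:ℝ))) - ρ := Set.mem_iInter.mp hx2 j
      have h3 : ⟪(EuclideanSpace.single j (1:ℝ)), x⟫ = x j := by
        rw [EuclideanSpace.inner_single_left]
        simp
      have h4 : ⟪-(EuclideanSpace.single j (1:ℝ)), x⟫ = -(x j) := by
        rw [inner_neg_left, h3]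
      have h5 := hhM _ (heunit j)
      have h6 := hhM (-(EuclideanSpace.single j (1:ℝ))) (by rw [norm_neg]; exact heunit j)
      rw [h3] at h1; rw [h4] at h2
      rw [abs_le]; constructor <;> linarith
    rw [EuclideanSpace.norm_eq]
    apply Real.sqrt_le_sqrt
    calc ∑ j, ‖x j‖^2 ≤ ∑ _j : Fin n, M^2 := by
          apply Finset.sum_le_sum
          intro j _
          rw [Real.norm_eq_abs]
          have h7 := hxj j
          nlinarith [abs_nonneg (x j)]
      _ = (n:ℝ) * M^2 := by
          rw [Finset.sum_const, Finset.card_univ, Fintype.card_fin, nsmul_eq_mul]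
  have hB₀compact : IsCompact B₀ := Metric.isCompact_of_isClosed_isBounded hB₀closed hB₀bounded
  -- finite feasibility specialised
  have hfeas : ∀ G : Finset (EuclideanSpace ℝ (Fin n)), (∀ w ∈ G, ‖w‖ = 1) →
      ∃ x, ∀ w ∈ G, ⟪w, x⟫ ≤ h w - ρ := by
    intro G hG
    apply finite_feasible h ρ hρpos G (fun w => w)
    · intro i hi
      have h1 := hwidth i (hG i hi)
      linarith [hρlt]
    · intro i hi ε hε
      obtain ⟨y, hyE, hy⟩ := hnear (-i) (by rw [norm_neg]; exact hG i hi) ε hε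
      exact ⟨y, fun j hj => hle j (hG j hj) y hyE, hy⟩
  have hcap : (B₀ ∩ ⋂ u : {u : EuclideanSpace ℝ (Fin n) // ‖u‖ = 1}, D u.1).Nonempty := by
    rw [Set.nonempty_iff_ne_empty]
    intro hemp
    obtain ⟨F, hF⟩ := hB₀compact.elim_finite_subfamily_closed _ (fun u => hDclosed _) hemp
    set G : Finset (EuclideanSpace ℝ (Fin n)) :=
      (F.image Subtype.val ∪ Finset.univ.image (fun j : Fin n => EuclideanSpace.single j (1:ℝ)))
        ∪ Finset.univ.image (fun j : Fin n => -(EuclideanSpace.single j (1:ℝ))) with hGdef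
    have hGunit : ∀ w ∈ G, ‖w‖ = 1 := by
      intro w hw
      rw [hGdef] at hw
      simp only [Finset.mem_union, Finset.mem_image, Finset.mem_univ, true_and] at hw
      rcases hw with (⟨u, _, rfl⟩ | ⟨j, rfl⟩) | ⟨j, rfl⟩
      · exact u.2
      · exact heunit j
      · rw [norm_neg]; exact heunit j
    obtain ⟨x, hx⟩ := hfeas G hGunit
    have hxB₀ : x ∈ B₀ := by
      constructor
      · refine Set.mem_iInter.mpr fun j => hx _ ?_
        rw [hGdef]
        exact Finset.mem_union_left _ (Finset.mem_union_right _
          (Finset.mem_image_of_mem _ (Finset.mem_univ j)))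
      · refine Set.mem_iInter.mpr fun j => hx _ ?_
        rw [hGdef]
        exact Finset.mem_union_right _ (Finset.mem_image_of_mem _ (Finset.mem_univ j))
    have hxF : x ∈ ⋂ u ∈ F, D u.1 := by
      refine Set.mem_iInter₂.mpr fun u hu => hx u.1 ?_
      rw [hGdef]
      exact Finset.mem_union_left _ (Finset.mem_union_left _ (Finset.mem_image_of_mem _ hu))
    have : x ∈ (∅ : Set (EuclideanSpace ℝ (Fin n))) := hF ▸ ⟨hxB₀, hxF⟩
    exact absurd this (Set.notMem_empty x)
  obtain ⟨x₀, _, hx₀all⟩ := hcap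
  have hx₀ : ∀ u : EuclideanSpace ℝ (Fin n), ‖u‖ = 1 → ⟪u, x₀⟫ ≤ h u - ρ :=
    fun u hu => Set.mem_iInter.mp hx₀all ⟨u, hu⟩
  -- ball is inside the closure
  have hballc : ∀ y ∈ Metric.ball x₀ ρ, y ∈ closure E := by
    intro y hy
    by_contra hyc
    obtain ⟨f, c, hfa, hfy⟩ :=
      geometric_hahn_banach_closed_point hconv.closure isClosed_closure hyc
    set w := (InnerProductSpace.toDual ℝ (EuclideanSpace ℝ (Fin n))).symm f with hwdef
    have hwapp : ∀ x, ⟪w, x⟫ = f x := fun x => InnerProductSpace.toDual_symm_apply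
    have hw0 : w ≠ 0 := by
      intro h0
      have h1 : f z₀ < c := hfa z₀ (subset_closure hz₀E)
      have h2 : c < f y := hfy
      have h3 : f z₀ = 0 := by rw [← hwapp, h0, inner_zero_left]
      have h4 : f y = 0 := by rw [← hwapp, h0, inner_zero_left]
      linarith
    have hnw : 0 < ‖w‖ := norm_pos_iff.mpr hw0
    set uu := ‖w‖⁻¹ • w with huudef
    have huu : ‖uu‖ = 1 := by
      rw [huudef, norm_smul, norm_inv, norm_norm, inv_mul_cancel₀ (ne_of_gt hnw)]
    have hinv : 0 < ‖w‖⁻¹ := inv_pos.mpr hnw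
    have h1 : h uu ≤ ‖w‖⁻¹ * c := by
      apply csSup_le (himgne uu)
      rintro cc ⟨x, hx, rfl⟩
      have h2 : ⟪x, uu⟫ = ‖w‖⁻¹ * f x := by
        rw [huudef, real_inner_smul_right, real_inner_comm, hwapp]
      show ⟪x, uu⟫ ≤ ‖w‖⁻¹ * c
      rw [h2]
      exact mul_le_mul_of_nonneg_left (le_of_lt (hfa x (subset_closure hx))) hinv.le
    have h2 : ⟪uu, x₀⟫ ≤ h uu - ρ := hx₀ uu huu
    have h3 : ⟪uu, y⟫ = ⟪uu, x₀⟫ + ⟪uu, y - x₀⟫ := by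
      rw [← inner_add_right]
      congr 1
      abel
    have h4 : ⟪uu, y - x₀⟫ ≤ ‖y - x₀‖ := by
      calc ⟪uu, y - x₀⟫ ≤ ‖uu‖ * ‖y - x₀‖ := real_inner_le_norm _ _
        _ = ‖y - x₀‖ := by rw [huu, one_mul]
    have h5 : ‖y - x₀‖ < ρ := by rwa [Metric.mem_ball, dist_eq_norm] at hy
    have h6 : ‖w‖⁻¹ * c < ⟪uu, y⟫ := by
      have h7 : ⟪uu, y⟫ = ‖w‖⁻¹ * f y := by
        rw [huudef, real_inner_smul_left, hwapp]
      rw [h7]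
      exact mul_lt_mul_of_pos_left hfy hinv
    linarith
  -- ball is inside E
  have hball : Metric.ball x₀ ρ ⊆ E := by
    intro y hy
    have hdy : ‖y - x₀‖ < ρ := by rwa [Metric.mem_ball, dist_eq_norm] at hy
    by_cases hyz : y = z₀
    · rw [hyz]; exact hz₀E
    · have hden : 0 < ‖y - z₀‖ := by
        rw [norm_pos_iff]; exact sub_ne_zero.mpr hyz
      set t : ℝ := (ρ - ‖y - x₀‖) / (2 * ‖y - z₀‖) with htdef
      have ht : 0 < t := div_pos (by linarith) (by linarith)
      have h1t : (0:ℝ) < 1 + t := by linarith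
      have h1t' : (1:ℝ) + t ≠ 0 := ne_of_gt h1t
      set y' := y + t • (y - z₀) with hy'def
      have hy'ball : y' ∈ Metric.ball x₀ ρ := by
        rw [Metric.mem_ball, dist_eq_norm]
        have he : y' - x₀ = (y - x₀) + t • (y - z₀) := by rw [hy'def]; abel
        rw [he]
        calc ‖(y - x₀) + t • (y - z₀)‖ ≤ ‖y - x₀‖ + ‖t • (y - z₀)‖ := norm_add_le _ _
          _ = ‖y - x₀‖ + t * ‖y - z₀‖ := by
              rw [norm_smul, Real.norm_eq_abs, abs_of_pos ht]
          _ = ‖y - x₀‖ + (ρ - ‖y - x₀‖)/2 := by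
              rw [htdef]; field_simp
          _ < ρ := by linarith
      have hy'cl : y' ∈ closure E := hballc y' hy'ball
      have hcombo : (t/(1+t)) • z₀ + (1/(1+t)) • y' = y := by
        rw [hy'def]
        match_scalars <;> field_simp <;> ring
      have hmem : y ∈ interior E := by
        rw [← hcombo]
        exact hconv.combo_interior_closure_mem_interior hz₀ hy'cl
          (div_pos ht h1t) (le_of_lt (div_pos one_pos h1t))
          (by rw [← add_div, div_eq_one_iff_eq h1t']; ring)
      exact interior_subset hmem
  have hρRS : ρ ∈ RS := ⟨hρpos, x₀, hball⟩
  have hfin : ρ ≤ sSup RS := le_csSup hRSbdd hρRS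
  linarith
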